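/- For every permutation π of length n, every integer 0 ≤ k ≤ n, and every positive integer t, P^t(π)|_k ∈ T^t(π|_k), where T^t(w) denotes the set of words reachable from w by t tumble moves. -/

import Mathlib

/-- Flip operator `F`: simultaneously reverse every (automatically pairwise disjoint)
`10` factor, i.e. every zero immediately preceded by a one swaps with that one.
Here `false` plays the role of `0` and `true` of `1`. -/
def flipWord : List Bool → List Bool
  | true :: false :: rest => false :: true :: flipWord rest
  | a :: rest => a :: flipWord rest
  | [] => []

/-- The positions (indices) of the zeros (`false`) of a binary word, left to right. -/
def zeroPositions (w : List Bool) : List ℕ :=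
  (List.range w.length).filter (fun i => w.getD i true = false)

/-- `u ⊴ v` : for every `i`, the `i`-th zero of `u` occurs at a position at most
that of the `i`-th zero of `v`. -/
def WLE (u v : List Bool) : Prop :=
  List.Forall₂ (· ≤ ·) (zeroPositions u) (zeroPositions v)

/-- One tumble move: choose pairwise non-overlapping factors of the form `1^+0^+`
covering every `10` factor, and reverse each in place. `Tumble w u` means `u ∈ T(w)`. -/
inductive Tumble : List Bool → List Bool → Prop
  | nil : Tumble [] []
  | zero {w u} : Tumble w u → Tumble (false :: w) (false :: u)
  | one {w u} : Tumble w u → w.head? ≠ some false → Tumble (true :: w) (true :: u)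
  | block {w u} (a b : ℕ) : 0 < a → 0 < b → Tumble w u →
      Tumble (List.replicate a true ++ List.replicate b false ++ w)
             (List.replicate b false ++ List.replicate a true ++ u)

/-- `TumbleN t w u` : `u` is reachable from `w` by exactly `t` tumble moves. -/
def TumbleN : ℕ → List Bool → List Bool → Prop
  | 0 => Eq
  | t + 1 => fun w u => ∃ v, TumbleN t w v ∧ Tumble v u

/-- The 0/1 projection at threshold `k`: the `i`-th letter is `0` iff `w(i) < k`. -/
def proj (k : ℕ) (w : List ℕ) : List Bool := w.map (fun x => decide (k ≤ x))

/-- Pop-stack operator `P`: partition into maximal strictly decreasing runs and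
reverse each run in place. -/
def popStack (w : List ℕ) : List ℕ :=
  ((w.splitBy (fun a b => decide (b < a))).map List.reverse).flatten

/- ### Auxiliary lemmas -/

lemma tumble_falses (b : ℕ) {w u : List Bool} (h : Tumble w u) :
    Tumble (List.replicate b false ++ w) (List.replicate b false ++ u) := by
  induction b with
  | zero => simpa
  | succ n ih =>
    rw [List.replicate_succ, List.cons_append, List.cons_append]
    exact Tumble.zero ih

lemma tumble_trues (a : ℕ) {w u : List Bool} (h : Tumble w u)
    (hw : w.head? ≠ some false) :
    Tumble (List.replicate a true ++ w) (List.replicate a true ++ u) := by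
  induction a with
  | zero => simpa
  | succ n ih =>
    rw [List.replicate_succ, List.cons_append, List.cons_append]
    refine Tumble.one ih ?_
    cases n with
    | zero => simpa using hw
    | succ m => simp [List.replicate_succ]

lemma tumble_run (a b : ℕ) {w u : List Bool} (h : Tumble w u)
    (hone : b = 0 → w.head? ≠ some false) :
    Tumble (List.replicate a true ++ List.replicate b false ++ w)
           (List.replicate b false ++ List.replicate a true ++ u) := by
  rcases Nat.eq_zero_or_pos a with ha | ha
  · subst ha
    simpa using tumble_falses b h
  · rcases Nat.eq_zero_or_pos b with hb | hb
    · subst hb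
      simpa using tumble_trues a h (hone rfl)
    · exact Tumble.block a b ha hb h

/-- An "antitone" boolean word is of the form `1^a 0^b`. -/
lemma bool_shape : ∀ v : List Bool, v.Chain' (fun p q => q ≤ p) →
    ∃ a b, v = List.replicate a true ++ List.replicate b false := by
  have allfalse : ∀ v : List Bool, v.Chain' (fun p q => q ≤ p) →
      v.head? ≠ some true → v = List.replicate v.length false := by
    intro v
    induction v with
    | nil => simp
    | cons x rest ih =>
      intro hch hx
      have hx' : x = false := by
        cases x
        · rfl
        · simp at hx
      subst hx'
      unfold List.Chain' at hch
      rw [List.isChain_cons] at hch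
      have hrest : rest = List.replicate rest.length false := by
        apply ih hch.2
        intro hr
        cases rest with
        | nil => simp at hr
        | cons y rest' =>
          have hy := hch.1 y rfl
          have : y = true := by simpa using hr
          subst this
          exact absurd hy (by decide)
      rw [List.length_cons, List.replicate_succ]
      exact congrArg (false :: ·) hrest
  intro v
  induction v with
  | nil => exact fun _ => ⟨0, 0, rfl⟩
  | cons x rest ih =>
    intro hch
    cases x with
    | true =>
      obtain ⟨a, b, hab⟩ := ih (hch.tail)
      exact ⟨a + 1, b, by rw [List.replicate_succ, hab]; simp⟩
    | false =>
      refine ⟨0, (false :: rest).length, ?_⟩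
      have := allfalse (false :: rest) hch (by simp)
      simpa using this

/-- Key step: tumbling the concatenation of projections of decreasing runs. -/
lemma tumble_groups (k : ℕ) : ∀ L : List (List ℕ),
    (∀ g ∈ L, g ≠ []) →
    (∀ g ∈ L, g.Chain' (fun x y => y < x)) →
    L.Chain' (fun g h => ∀ x ∈ g.getLast?, ∀ y ∈ h.head?, x < y) →
    Tumble ((L.map (proj k)).flatten) ((L.map (fun g => proj k g.reverse)).flatten) := by
  intro L
  induction L with
  | nil => intro _ _ _; exact Tumble.nil
  | cons g L' ih =>
    intro hne hch hbd
    have hgne : g ≠ [] := hne g (by simp)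
    -- shape of proj k g
    have hshape : ∃ a b, proj k g = List.replicate a true ++ List.replicate b false := by
      apply bool_shape
      unfold proj List.Chain'
      rw [List.isChain_map]
      apply (hch g (by simp)).imp
      intro x y hxy
      have : k ≤ y → k ≤ x := fun h => le_of_lt (lt_of_le_of_lt h hxy)
      by_cases hy : k ≤ y <;> simp [hy, this]
    obtain ⟨a, b, hab⟩ := hshape
    have hrev : proj k g.reverse = List.replicate b false ++ List.replicate a true := by
      unfold proj at hab ⊢
      rw [List.map_reverse, hab, List.reverse_append, List.reverse_replicate,
        List.reverse_replicate]
    have hIH : Tumble ((L'.map (proj k)).flatten)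
        ((L'.map (fun g => proj k g.reverse)).flatten) :=
      ih (fun g hg => hne g (by simp [hg])) (fun g hg => hch g (by simp [hg])) hbd.tail
    have hone : b = 0 → ((L'.map (proj k)).flatten).head? ≠ some false := by
      intro hb0
      subst hb0
      cases L' with
      | nil => simp
      | cons h L'' =>
        have hhne : h ≠ [] := hne h (by simp)
        obtain ⟨x, h', rfl⟩ := List.exists_cons_of_ne_nil hhne
        -- last of g is ≥ k since proj k g is all true
        have hglast : k ≤ g.getLast hgne := by
          have hmem : g.getLast hgne ∈ g := List.getLast_mem hgne
          have : decide (k ≤ g.getLast hgne) ∈ proj k g := List.mem_map_of_mem hmem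
          rw [hab] at this
          simp only [List.replicate_zero, List.append_nil] at this
          have := List.eq_of_mem_replicate this
          simpa using this
        have hlt : g.getLast hgne < x := by
          have h1 := (List.isChain_cons_cons.mp hbd).1
          exact h1 _ (by rw [List.getLast?_eq_getLast hgne]; rfl) x rfl
        have hkx : k ≤ x := le_of_lt (lt_of_le_of_lt hglast hlt)
        simp [proj, hkx]
    rw [List.map_cons, List.map_cons, List.flatten_cons, List.flatten_cons, hab, hrev,
      List.append_assoc, List.append_assoc]
    rw [← List.append_assoc, ← List.append_assoc]
    exact tumble_run a b hIH hone

/-- Upgrade the splitBy boundary condition using nodup. -/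
lemma boundary_lt : ∀ (L : List (List ℕ)), L.flatten.Nodup → (∀ g ∈ L, g ≠ []) →
    L.Chain' (fun g h => ∃ hg hh, (decide ((h.head hh) < (g.getLast hg)) : Bool) = false) →
    L.Chain' (fun g h => ∀ x ∈ g.getLast?, ∀ y ∈ h.head?, x < y) := by
  intro L
  induction L with
  | nil => intro _ _ _; exact List.isChain_nil
  | cons g L' ih =>
    intro hnd hne hch
    cases L' with
    | nil => exact List.isChain_singleton _
    | cons h L'' =>
      unfold List.Chain' at hch ⊢
      rw [List.isChain_cons_cons] at hch ⊢
      obtain ⟨⟨hg, hh, hfalse⟩, hch'⟩ := hch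
      constructor
      · have hle : g.getLast hg ≤ h.head hh := by
          simpa using le_of_not_gt (by simpa using hfalse)
        have hne' : g.getLast hg ≠ h.head hh := by
          rw [List.flatten_cons, List.nodup_append] at hnd
          intro heq
          apply hnd.2.2 _ (List.getLast_mem hg) _ ?_ rfl
          rw [heq, List.flatten_cons]
          exact List.mem_append_left _ (List.head_mem hh)
        have hlt := lt_of_le_of_ne hle hne'
        intro x hx y hy
        rw [List.getLast?_eq_getLast hg, Option.mem_some_iff] at hx
        rw [List.head?_eq_head hh, Option.mem_some_iff] at hy
        rw [← hx, ← hy]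
        exact hlt
      · apply ih
        · rw [List.flatten_cons, List.nodup_append] at hnd
          exact hnd.2.1
        · intro g' hg'; exact hne g' (by simp [hg'])
        · exact hch'

lemma tumble_popStack (k : ℕ) (w : List ℕ) (hw : w.Nodup) :
    Tumble (proj k w) (proj k (popStack w)) := by
  set L := w.splitBy (fun a b => decide (b < a)) with hL
  have hflat : L.flatten = w := List.flatten_splitBy _ _
  have hne : ∀ g ∈ L, g ≠ [] := fun g hg => List.ne_nil_of_mem_splitBy hg
  have hch : ∀ g ∈ L, g.Chain' (fun x y => y < x) := by
    intro g hg
    have := List.isChain_of_mem_splitBy hg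
    exact this.imp (fun x y h => by simpa using h)
  have hbd : L.Chain' (fun g h => ∀ x ∈ g.getLast?, ∀ y ∈ h.head?, x < y) := by
    apply boundary_lt L (hflat ▸ hw) hne
    exact List.isChain_getLast_head_splitBy (fun a b => decide (b < a)) w
  have h1 : proj k w = (L.map (proj k)).flatten := by
    rw [← hflat]
    unfold proj
    rw [List.map_flatten]
  have h2 : proj k (popStack w) = (L.map (fun g => proj k g.reverse)).flatten := by
    unfold popStack proj
    rw [List.map_flatten, List.map_map, ← hL]
    rfl
  rw [h1, h2]
  exact tumble_groups k L hne hch hbd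

lemma popStack_perm (w : List ℕ) : (popStack w).Perm w := by
  unfold popStack
  have : ((w.splitBy (fun a b => decide (b < a))).map List.reverse).flatten.Perm
      (w.splitBy (fun a b => decide (b < a))).flatten := by
    apply List.Perm.flatten_congr
    rw [List.forall₂_map_left_iff]
    rw [List.forall₂_same]
    intro x _
    exact List.reverse_perm x
  rw [List.flatten_splitBy] at this
  exact this

/-- For every permutation `π` of length `n`, `0 ≤ k ≤ n` and `t ≥ 1`,
`P^t(π)|ₖ ∈ T^t(π|ₖ)`. -/
theorem stmt11 (n k t : ℕ) (π : List ℕ) (h : π.Perm (List.range' 1 n))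
    (hk : k ≤ n) (ht : 1 ≤ t) :
    TumbleN t (proj k π) (proj k (popStack^[t] π)) := by
  have hnd : π.Nodup := h.nodup_iff.mpr (by simp [List.nodup_range'])
  clear ht hk h
  induction t with
  | zero => rfl
  | succ t ihl =>
    refine ⟨proj k (popStack^[t] π), ihl, ?_⟩
    have hnd' : (popStack^[t] π).Nodup := by
      clear ihl
      induction t with
      | zero => simpa
      | succ s ihs =>
        rw [Function.iterate_succ_apply']
        exact (popStack_perm _).nodup_iff.mpr ihs
    rw [Function.iterate_succ_apply']
    exact tumble_popStack k _ hnd'
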